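/- Suppose δ_{1,t} · n†_eff ≤ c₁ · κ†_t for a constant c₁ > 0, and let z > 0. If τ > 0 satisfies the population tuning equation Σ_{s=t}^{t+m} E[ min( w_{s,t}² (X_s² − σ_t²)², τ² ) ] = z·τ², then τ ≤ √( (1 + c₁)·κ†_t / (n†_eff · z) ). -/

import Mathlib

open MeasureTheory ProbabilityTheory Finset

/-- Upper bound on the population robustification parameter (proof of Theorem 2):
if `δ₁ₜ n† ≤ c₁ κ†ₜ` and `τ` solves the population tuning equation
`Σₛ E[min(w² (Xₛ² − σₜ²)², τ²)] = z τ²`, then `τ ≤ √((1+c₁) κ†ₜ/(n† z))`. -/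
theorem population_tau_upper_bound
    {Ω : Type*} [MeasurableSpace Ω] (μ : Measure Ω) [IsProbabilityMeasure μ]
    (X : ℤ → Ω → ℝ) (σ κ : ℤ → ℝ)
    (hXmeas : ∀ s, Measurable (X s))
    (hindep : iIndepFun X μ)
    (hmean : ∀ s, ∫ ω, X s ω ∂μ = 0)
    (hvar : ∀ s, ∫ ω, (X s ω) ^ 2 ∂μ = (σ s) ^ 2)
    (hσpos : ∀ s, 0 < σ s)
    (hκ : ∀ s, ∫ ω, ((X s ω) ^ 2 - (σ s) ^ 2) ^ 2 ∂μ = κ s)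
    (hX4int : ∀ s, Integrable (fun ω => (X s ω) ^ 4) μ)
    (t : ℤ) (m : ℕ) (lam : ℝ) (hlam : lam ∈ Set.Ioo (0 : ℝ) 1)
    (w : ℕ → ℝ) (hw : ∀ i, w i = lam ^ i / ∑ j ∈ Finset.range (m + 1), lam ^ j)
    (neff κdag δ1 : ℝ)
    (hneff : neff = 1 / ∑ i ∈ Finset.range (m + 1), (w i) ^ 2)
    (hκdag : κdag = (∑ i ∈ Finset.range (m + 1), (w i) ^ 2 * κ (t + i)) /
      ∑ i ∈ Finset.range (m + 1), (w i) ^ 2)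
    (hδ1 : δ1 = ∑ i ∈ Finset.range (m + 1), (w i) ^ 2 * ((σ (t + i)) ^ 2 - (σ t) ^ 2) ^ 2)
    (c₁ : ℝ) (hc₁ : 0 < c₁)
    (hsmooth : δ1 * neff ≤ c₁ * κdag)
    (z τ : ℝ) (hz : 0 < z) (hτpos : 0 < τ)
    (htuning : ∑ i ∈ Finset.range (m + 1),
        ∫ ω, min ((w i) ^ 2 * ((X (t + i) ω) ^ 2 - (σ t) ^ 2) ^ 2) (τ ^ 2) ∂μ = z * τ ^ 2) :
    τ ≤ Real.sqrt ((1 + c₁) * κdag / (neff * z)) := by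

  obtain ⟨hlam0, hlam1⟩ := hlam
  set S := ∑ i ∈ Finset.range (m + 1), (w i) ^ 2 with hS
  have hwpos : ∀ i, 0 < w i := by
    intro i
    rw [hw]
    exact div_pos (pow_pos hlam0 i)
      (Finset.sum_pos (fun j _ => pow_pos hlam0 j) ⟨0, by simp⟩)
  have hSpos : 0 < S :=
    Finset.sum_pos (fun i _ => pow_pos (hwpos i) 2) ⟨0, by simp⟩
  have hX2int : ∀ s, Integrable (fun ω => (X s ω) ^ 2) μ := by
    intro s
    refine Integrable.mono' ((hX4int s).add (integrable_const 1))
      ((hXmeas s).pow_const 2).aestronglyMeasurable ?_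
    filter_upwards with ω
    have h : (X s ω) ^ 2 ≤ (X s ω) ^ 4 + 1 := by nlinarith [sq_nonneg ((X s ω) ^ 2 - 1)]
    simpa [abs_of_nonneg (sq_nonneg (X s ω))] using h
  have hsqint : ∀ s (c : ℝ), Integrable (fun ω => ((X s ω) ^ 2 - c) ^ 2) μ := by
    intro s c
    have heq : (fun ω => ((X s ω) ^ 2 - c) ^ 2)
        = fun ω => (X s ω) ^ 4 + ((-(2 * c)) * (X s ω) ^ 2 + c ^ 2) := by
      funext ω; ring
    rw [heq]
    exact (hX4int s).add (((hX2int s).const_mul _).add (integrable_const _))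
  have hkey : ∀ s, ∫ ω, ((X s ω) ^ 2 - (σ t) ^ 2) ^ 2 ∂μ
      = κ s + ((σ s) ^ 2 - (σ t) ^ 2) ^ 2 := by
    intro s
    have heq : (fun ω => ((X s ω) ^ 2 - (σ t) ^ 2) ^ 2)
        = fun ω => ((X s ω) ^ 2 - (σ s) ^ 2) ^ 2 +
            ((2 * ((σ s) ^ 2 - (σ t) ^ 2)) * (X s ω) ^ 2 +
              (((σ t) ^ 2) ^ 2 - ((σ s) ^ 2) ^ 2)) := by
      funext ω; ring
    have hg1 : Integrable (fun ω => (2 * ((σ s) ^ 2 - (σ t) ^ 2)) * (X s ω) ^ 2) μ :=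
      (hX2int s).const_mul _
    have hg : Integrable (fun ω => (2 * ((σ s) ^ 2 - (σ t) ^ 2)) * (X s ω) ^ 2 +
        (((σ t) ^ 2) ^ 2 - ((σ s) ^ 2) ^ 2)) μ := hg1.add (integrable_const _)
    rw [heq, integral_add (hsqint s _) hg, integral_add hg1 (integrable_const _),
      integral_const_mul, hvar, hκ, integral_const]
    simp only [probReal_univ, ENNReal.toReal_one, smul_eq_mul, one_mul]
    ring
  have hminint : ∀ i, Integrable
      (fun ω => min ((w i) ^ 2 * ((X (t + i) ω) ^ 2 - (σ t) ^ 2) ^ 2) (τ ^ 2)) μ := by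
    intro i
    refine Integrable.mono' (integrable_const (τ ^ 2)) ?_ ?_
    · exact ((measurable_const.mul ((((hXmeas (t + i)).pow_const 2).sub
        measurable_const).pow_const 2)).min measurable_const).aestronglyMeasurable
    · filter_upwards with ω
      have h1 : (0:ℝ) ≤ (w i) ^ 2 * ((X (t + i) ω) ^ 2 - (σ t) ^ 2) ^ 2 :=
        mul_nonneg (sq_nonneg _) (sq_nonneg _)
      rw [Real.norm_eq_abs, abs_of_nonneg (le_min h1 (sq_nonneg τ))]
      exact min_le_right _ _
  have hκdagS : κdag * S = ∑ i ∈ Finset.range (m + 1), (w i) ^ 2 * κ (t + i) := by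
    rw [hκdag]; field_simp
  have hδ1le : δ1 ≤ c₁ * κdag * S := by
    have h := hsmooth
    rw [hneff] at h
    calc δ1 = δ1 * (1 / S) * S := by field_simp
      _ ≤ c₁ * κdag * S := mul_le_mul_of_nonneg_right h hSpos.le
  have hle : z * τ ^ 2 ≤ (1 + c₁) * (κdag * S) := by
    calc z * τ ^ 2
        = ∑ i ∈ Finset.range (m + 1),
            ∫ ω, min ((w i) ^ 2 * ((X (t + i) ω) ^ 2 - (σ t) ^ 2) ^ 2) (τ ^ 2) ∂μ :=
          htuning.symm
      _ ≤ ∑ i ∈ Finset.range (m + 1),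
            ∫ ω, (w i) ^ 2 * ((X (t + i) ω) ^ 2 - (σ t) ^ 2) ^ 2 ∂μ := by
          refine Finset.sum_le_sum fun i _ => ?_
          exact integral_mono (hminint i) ((hsqint (t + i) _).const_mul _)
            fun ω => min_le_left _ _
      _ = ∑ i ∈ Finset.range (m + 1),
            (w i) ^ 2 * (κ (t + i) + ((σ (t + i)) ^ 2 - (σ t) ^ 2) ^ 2) := by
          refine Finset.sum_congr rfl fun i _ => ?_
          rw [integral_const_mul, hkey]
      _ = (∑ i ∈ Finset.range (m + 1), (w i) ^ 2 * κ (t + i)) + δ1 := by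
          rw [hδ1, ← Finset.sum_add_distrib]
          exact Finset.sum_congr rfl fun i _ => by ring
      _ = κdag * S + δ1 := by rw [hκdagS]
      _ ≤ (1 + c₁) * (κdag * S) := by nlinarith [hδ1le]
  have hτ2 : τ ^ 2 ≤ (1 + c₁) * κdag / (neff * z) := by
    rw [hneff]
    have : (1 + c₁) * κdag / (1 / S * z) = (1 + c₁) * (κdag * S) / z := by
      field_simp
    rw [this, le_div_iff₀ hz]
    nlinarith [hle]
  calc τ = Real.sqrt (τ ^ 2) := by rw [Real.sqrt_sq hτpos.le]
    _ ≤ Real.sqrt ((1 + c₁) * κdag / (neff * z)) := Real.sqrt_le_sqrt hτ2
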